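/- arXiv:2007.02377 — 4 statements merged into one kernel-verified Lean document; each statement's English description precedes it below -/
import Mathlib

section
/- In the graph G, every minimum-cost bisection S (i.e., every S with w(S)=w(V∖S)=12n minimizing cost(S) among all bisections) has the property that its cut contains exactly one edge from each of the paths P_A, P_B, P_C, and contains none of the edges e_A, e_B, e_C. -/
open Finset

namespace SCLB

inductive V (n : ℕ) : Type
  | u : V n
  | v : V n
  | A : Fin n → V n
  | B : Fin n → V n
  | C : Fin n → V n
  deriving DecidableEq, Fintype

/-- Edges: `(p, some i)` is the `i`-th edge (0-indexed) on path `p` (`p = 0,1,2` for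
`P_A, P_B, P_C`), joining the `(i+1)`-st path vertex to the next one; `(p, none)` is the
special edge `e_A`, `e_B`, `e_C` respectively. -/
abbrev E (n : ℕ) := Fin 3 × Option (Fin n)

def Tsum (n : ℕ) (a b c : Fin n → ℕ) : ℕ := ∑ i, (a i + b i + c i)

def beta (n : ℕ) (a b c : Fin n → ℕ) : ℕ := 4 * Tsum n a b c * n ^ 2

def firstV {n : ℕ} (f : Fin n → V n) (dflt : V n) : V n :=
  if h : 0 < n then f ⟨0, h⟩ else dflt

def nextV {n : ℕ} (f : Fin n → V n) (top : V n) (i : Fin n) : V n :=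
  if h : i.val + 1 < n then f ⟨i.val + 1, h⟩ else top

/-- The two endpoints of each edge. -/
def ends (n : ℕ) : E n → V n × V n
  | (p, none) =>
      if p = 0 then (V.v, firstV V.A V.u)
      else if p = 1 then (V.v, firstV V.B V.u)
      else (V.u, firstV V.C V.v)
  | (p, some i) =>
      if p = 0 then (V.A i, nextV V.A V.u i)
      else if p = 1 then (V.B i, nextV V.B V.u i)
      else (V.C i, nextV V.C V.v i)

/-- Edge costs. -/
def ecost (n : ℕ) (a b c : Fin n → ℕ) : E n → ℚ
  | (_, none) => 1210 * (n : ℚ) ^ 2 * (2 * (beta n a b c : ℚ) + (Tsum n a b c : ℚ))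
  | (p, some i) =>
      if p = 0 then (beta n a b c : ℚ) + (a i : ℚ)
      else if p = 1 then (beta n a b c : ℚ) + (b i : ℚ)
      else (beta n a b c : ℚ) + (Tsum n a b c : ℚ) - (c i : ℚ)

/-- Vertex weights. -/
def wt (n : ℕ) : V n → ℚ
  | V.u => 10 * n
  | V.v => 11 * n
  | _ => 1

/-- The cut of `S`: edges with exactly one endpoint in `S`. -/
def cut (n : ℕ) (S : Finset (V n)) : Finset (E n) :=
  Finset.univ.filter fun e => ¬(((ends n e).1 ∈ S) ↔ ((ends n e).2 ∈ S))

def cutCost (n : ℕ) (a b c : Fin n → ℕ) (S : Finset (V n)) : ℚ :=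
  ∑ e ∈ cut n S, ecost n a b c e

def wOf (n : ℕ) (S : Finset (V n)) : ℚ := ∑ x ∈ S, wt n x

def quotientVal (n : ℕ) (a b c : Fin n → ℕ) (S : Finset (V n)) : ℚ :=
  cutCost n a b c S / min (wOf n S) (wOf n Sᶜ)

def sparsity (n : ℕ) (a b c : Fin n → ℕ) (S : Finset (V n)) : ℚ :=
  cutCost n a b c S / (wOf n S * wOf n Sᶜ)

def IsBisection (n : ℕ) (S : Finset (V n)) : Prop :=
  wOf n S = 12 * n ∧ wOf n Sᶜ = 12 * n

def PA (n : ℕ) : Finset (E n) := Finset.univ.filter fun e => e.1 = 0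
def PB (n : ℕ) : Finset (E n) := Finset.univ.filter fun e => e.1 = 1
def PC (n : ℕ) : Finset (E n) := Finset.univ.filter fun e => e.1 = 2


/-! ### Auxiliary machinery -/

def vEquiv (n : ℕ) : V n ≃ (Unit ⊕ Unit ⊕ Fin n ⊕ Fin n ⊕ Fin n) where
  toFun x := match x with
    | V.u => Sum.inl ()
    | V.v => Sum.inr (Sum.inl ())
    | V.A i => Sum.inr (Sum.inr (Sum.inl i))
    | V.B i => Sum.inr (Sum.inr (Sum.inr (Sum.inl i)))
    | V.C i => Sum.inr (Sum.inr (Sum.inr (Sum.inr i)))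
  invFun y := match y with
    | Sum.inl () => V.u
    | Sum.inr (Sum.inl ()) => V.v
    | Sum.inr (Sum.inr (Sum.inl i)) => V.A i
    | Sum.inr (Sum.inr (Sum.inr (Sum.inl i))) => V.B i
    | Sum.inr (Sum.inr (Sum.inr (Sum.inr i))) => V.C i
  left_inv x := by cases x <;> rfl
  right_inv y := by rcases y with _ | (_ | (_ | (_ | _))) <;> rfl

lemma sum_V {n : ℕ} {M : Type*} [AddCommMonoid M] (f : V n → M) :
    ∑ x, f x = f V.u + f V.v + ∑ i, f (V.A i) + ∑ i, f (V.B i) + ∑ i, f (V.C i) := by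
  rw [← Equiv.sum_comp (vEquiv n).symm f]
  simp [Fintype.sum_sum_type, vEquiv, add_assoc]

lemma wt_decomp {n : ℕ} (x : V n) :
    wt n x = 1 + (if x = V.u then 10 * (n:ℚ) - 1 else 0)
      + (if x = V.v then 11 * (n:ℚ) - 1 else 0) := by
  cases x <;> simp [wt] <;> ring

lemma wOf_eq {n : ℕ} (S : Finset (V n)) :
    wOf n S = S.card + (if V.u ∈ S then 10 * (n:ℚ) - 1 else 0)
      + (if V.v ∈ S then 11 * (n:ℚ) - 1 else 0) := by
  unfold wOf
  rw [Finset.sum_congr rfl (fun x _ => wt_decomp x)]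
  rw [Finset.sum_add_distrib, Finset.sum_add_distrib, Finset.sum_const,
    Finset.sum_ite_eq' S V.u (fun _ => 10 * (n:ℚ) - 1),
    Finset.sum_ite_eq' S V.v (fun _ => 11 * (n:ℚ) - 1)]
  simp

lemma wOf_univ {n : ℕ} : wOf n (univ : Finset (V n)) = 24 * n := by
  unfold wOf
  rw [sum_V (wt n)]
  simp [wt]
  ring

lemma wOf_add_compl {n : ℕ} (S : Finset (V n)) : wOf n S + wOf n Sᶜ = 24 * n := by
  rw [← wOf_univ (n := n)]
  exact Finset.sum_add_sum_compl S (wt n)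

lemma bisection_split {n : ℕ} (hn : 1 < n) (S : Finset (V n)) (hS1 : wOf n S = 12 * n)
    (hS2 : wOf n Sᶜ = 12 * n) : ¬ (V.u ∈ S ↔ V.v ∈ S) := by
  have hn2 : (2:ℚ) ≤ n := by exact_mod_cast hn
  rintro ⟨⟩
  by_cases hu : V.u ∈ S
  · have hv : V.v ∈ S := by tauto
    have := wOf_eq S
    rw [hS1, if_pos hu, if_pos hv] at this
    have hc : (0:ℚ) ≤ (S.card : ℚ) := by positivity
    linarith
  · have hv : V.v ∉ S := by tauto
    have hu' : V.u ∈ Sᶜ := by simpa using hu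
    have hv' : V.v ∈ Sᶜ := by simpa using hv
    have := wOf_eq Sᶜ
    rw [hS2, if_pos hu', if_pos hv'] at this
    have hc : (0:ℚ) ≤ (Sᶜ.card : ℚ) := by positivity
    linarith

/-! ### The explicit optimal-ish bisection `S₀` -/

def mem₀ (n : ℕ) : V n → Bool
  | V.u => true
  | V.v => false
  | V.A i => decide (0 < i.val)
  | V.B i => decide (0 < i.val)
  | V.C i => decide (i.val < 2)

def S₀ (n : ℕ) : Finset (V n) := univ.filter (fun x => mem₀ n x = true)

lemma mem_S₀' {n : ℕ} (x : V n) : (x ∈ S₀ n) = (mem₀ n x = true) := by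
  simp [S₀]

lemma sum_ind_pos {n : ℕ} (hn : 1 < n) :
    ∑ i : Fin n, (if 0 < i.val then (1:ℚ) else 0) = n - 1 := by
  have h0 : 0 < n := by omega
  have key : ∀ i : Fin n, (if 0 < i.val then (1:ℚ) else 0)
      = 1 - (if i = ⟨0, h0⟩ then 1 else 0) := by
    intro i
    rcases Nat.eq_zero_or_pos i.val with h | h
    · rw [if_neg (by omega), if_pos (Fin.ext h)]; ring
    · rw [if_pos h, if_neg (by intro he; rw [he] at h; simp at h)]; ring
  rw [Finset.sum_congr rfl (fun i _ => key i), Finset.sum_sub_distrib,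
    Finset.sum_ite_eq' univ (⟨0,h0⟩ : Fin n) (fun _ => (1:ℚ))]
  simp

lemma sum_ind_lt2 {n : ℕ} (hn : 1 < n) :
    ∑ i : Fin n, (if i.val < 2 then (1:ℚ) else 0) = 2 := by
  have h0 : 0 < n := by omega
  have key : ∀ i : Fin n, (if i.val < 2 then (1:ℚ) else 0)
      = (if i = ⟨0, h0⟩ then 1 else 0) + (if i = ⟨1, hn⟩ then 1 else 0) := by
    intro i
    by_cases h : i.val < 2
    · interval_cases hi : i.val
      · rw [if_pos (by omega), if_pos (Fin.ext hi),
          if_neg (by intro he; rw [he] at hi; simp at hi)]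
        ring
      · rw [if_pos (by omega), if_neg (by intro he; rw [he] at hi; simp at hi),
          if_pos (Fin.ext hi)]
        ring
    · rw [if_neg h, if_neg (by intro he; rw [he] at h; simp at h),
        if_neg (by intro he; rw [he] at h; simp at h)]
      ring
  rw [Finset.sum_congr rfl (fun i _ => key i), Finset.sum_add_distrib,
    Finset.sum_ite_eq' univ (⟨0,h0⟩ : Fin n) (fun _ => (1:ℚ)),
    Finset.sum_ite_eq' univ (⟨1,hn⟩ : Fin n) (fun _ => (1:ℚ))]
  norm_num

lemma wOf_S₀ {n : ℕ} (hn : 1 < n) : wOf n (S₀ n) = 12 * n := by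
  unfold wOf S₀
  rw [Finset.sum_filter, sum_V]
  simp only [mem₀, wt, decide_eq_true_eq]
  simp only [Bool.false_eq_true, ↓reduceIte, add_zero]
  rw [sum_ind_pos hn, sum_ind_lt2 hn]
  ring

lemma isBisection_S₀ {n : ℕ} (hn : 1 < n) : IsBisection n (S₀ n) := by
  have h1 := wOf_S₀ (n := n) hn
  have h2 := wOf_add_compl (S₀ n)
  constructor
  · exact h1
  · rw [h1] at h2; linarith

lemma cut_S₀ {n : ℕ} (h0 : 0 < n) (h1 : 1 < n) :
    cut n (S₀ n) = {((0 : Fin 3), some (⟨0, h0⟩ : Fin n)),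
      ((1 : Fin 3), some (⟨0, h0⟩ : Fin n)), ((2 : Fin 3), some (⟨1, h1⟩ : Fin n))} := by
  ext ⟨p, o⟩
  simp only [cut, Finset.mem_filter, Finset.mem_univ, true_and, Finset.mem_insert,
    Finset.mem_singleton, Prod.mk.injEq]
  rcases p with ⟨pv, hp⟩
  interval_cases pv
  · rcases o with _ | i
    · simp only [ends]
      rw [if_pos (show ((⟨0, hp⟩ : Fin 3) = 0) from Fin.ext rfl), firstV, dif_pos h0]
      simp [mem_S₀', mem₀, Fin.ext_iff]
    · simp only [ends]
      rw [if_pos (show ((⟨0, hp⟩ : Fin 3) = 0) from Fin.ext rfl)]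
      rcases Nat.lt_or_ge (i.val + 1) n with h | h
      · rw [nextV, dif_pos h]
        simp only [mem_S₀', mem₀, Option.some.injEq, Fin.ext_iff, Fin.val_zero, Fin.val_one,
          Fin.val_mk, decide_eq_true_eq]
        norm_num
        try omega
      · rw [nextV, dif_neg (by omega)]
        simp only [mem_S₀', mem₀, Option.some.injEq, Fin.ext_iff, Fin.val_zero, Fin.val_one,
          Fin.val_mk, decide_eq_true_eq]
        norm_num
        try omega
  · rcases o with _ | i
    · simp only [ends]
      rw [if_neg (by simp [Fin.ext_iff]),
        if_pos (show ((⟨1, hp⟩ : Fin 3) = 1) from Fin.ext rfl), firstV, dif_pos h0]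
      simp [mem_S₀', mem₀, Fin.ext_iff]
    · simp only [ends]
      rw [if_neg (by simp [Fin.ext_iff]),
        if_pos (show ((⟨1, hp⟩ : Fin 3) = 1) from Fin.ext rfl)]
      rcases Nat.lt_or_ge (i.val + 1) n with h | h
      · rw [nextV, dif_pos h]
        simp only [mem_S₀', mem₀, Option.some.injEq, Fin.ext_iff, Fin.val_zero, Fin.val_one,
          Fin.val_mk, decide_eq_true_eq]
        norm_num
        try omega
      · rw [nextV, dif_neg (by omega)]
        simp only [mem_S₀', mem₀, Option.some.injEq, Fin.ext_iff, Fin.val_zero, Fin.val_one,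
          Fin.val_mk, decide_eq_true_eq]
        norm_num
        try omega
  · rcases o with _ | i
    · simp only [ends]
      rw [if_neg (by simp [Fin.ext_iff]), if_neg (by simp [Fin.ext_iff]), firstV, dif_pos h0]
      simp [mem_S₀', mem₀, Fin.ext_iff]
    · simp only [ends]
      rw [if_neg (by simp [Fin.ext_iff]), if_neg (by simp [Fin.ext_iff])]
      rcases Nat.lt_or_ge (i.val + 1) n with h | h
      · rw [nextV, dif_pos h]
        simp only [mem_S₀', mem₀, Option.some.injEq, Fin.ext_iff, Fin.val_zero, Fin.val_one,
          Fin.val_mk, decide_eq_true_eq]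
        norm_num
        try omega
      · rw [nextV, dif_neg (by omega)]
        simp only [mem_S₀', mem₀, Option.some.injEq, Fin.ext_iff, Fin.val_zero, Fin.val_one,
          Fin.val_mk, decide_eq_true_eq]
        norm_num
        try omega

/-! ### Bounds on quantities -/

lemma Tsum_pos {n : ℕ} (hn : 1 < n) (a b c : Fin n → ℕ) (ha : ∀ i, 0 < a i) :
    0 < Tsum n a b c := by
  have h0 : 0 < n := by omega
  unfold Tsum
  have : (0:ℕ) < a ⟨0, h0⟩ + b ⟨0, h0⟩ + c ⟨0, h0⟩ := by have := ha ⟨0, h0⟩; omega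
  calc (0:ℕ) < a ⟨0, h0⟩ + b ⟨0, h0⟩ + c ⟨0, h0⟩ := this
    _ ≤ _ := Finset.single_le_sum (f := fun j => a j + b j + c j)
      (fun i _ => Nat.zero_le _) (Finset.mem_univ _)

lemma le_Tsum_a {n : ℕ} (a b c : Fin n → ℕ) (i : Fin n) : a i ≤ Tsum n a b c := by
  calc a i ≤ a i + b i + c i := by omega
    _ ≤ _ := Finset.single_le_sum (f := fun j => a j + b j + c j)
      (fun j _ => Nat.zero_le _) (Finset.mem_univ i)

lemma le_Tsum_b {n : ℕ} (a b c : Fin n → ℕ) (i : Fin n) : b i ≤ Tsum n a b c := by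
  calc b i ≤ a i + b i + c i := by omega
    _ ≤ _ := Finset.single_le_sum (f := fun j => a j + b j + c j)
      (fun j _ => Nat.zero_le _) (Finset.mem_univ i)

lemma le_Tsum_c {n : ℕ} (a b c : Fin n → ℕ) (i : Fin n) : c i ≤ Tsum n a b c := by
  calc c i ≤ a i + b i + c i := by omega
    _ ≤ _ := Finset.single_le_sum (f := fun j => a j + b j + c j)
      (fun j _ => Nat.zero_le _) (Finset.mem_univ i)

lemma beta_le_ecost {n : ℕ} (hn : 1 < n) (a b c : Fin n → ℕ) (e : E n) :
    (beta n a b c : ℚ) ≤ ecost n a b c e := by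
  have hT : ∀ i, (c i : ℚ) ≤ (Tsum n a b c : ℚ) := fun i => by
    exact_mod_cast le_Tsum_c a b c i
  have hTnn : (0:ℚ) ≤ (Tsum n a b c : ℚ) := by positivity
  have hbnn : (0:ℚ) ≤ (beta n a b c : ℚ) := by positivity
  have hn1 : (1:ℚ) ≤ (n:ℚ) := by exact_mod_cast hn.le
  rcases e with ⟨p, o⟩
  rcases o with _ | i
  · show (beta n a b c : ℚ) ≤ 1210 * (n : ℚ) ^ 2 * (2 * (beta n a b c : ℚ) + (Tsum n a b c : ℚ))
    have hsq : (1:ℚ) ≤ (n:ℚ) ^ 2 := by nlinarith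
    have key : (1:ℚ) * (2 * (beta n a b c : ℚ) + (Tsum n a b c : ℚ))
        ≤ 1210 * (n : ℚ) ^ 2 * (2 * (beta n a b c : ℚ) + (Tsum n a b c : ℚ)) := by
      apply mul_le_mul_of_nonneg_right _ (by linarith)
      nlinarith
    linarith
  · show (beta n a b c : ℚ) ≤ ite _ _ _
    split_ifs with h1 h2
    · have : (0:ℚ) ≤ (a i : ℚ) := by positivity
      linarith
    · have : (0:ℚ) ≤ (b i : ℚ) := by positivity
      linarith
    · have := hT i
      linarith

lemma ecost_nonneg {n : ℕ} (hn : 1 < n) (a b c : Fin n → ℕ) (e : E n) :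
    (0:ℚ) ≤ ecost n a b c e := by
  have := beta_le_ecost hn a b c e
  have hbnn : (0:ℚ) ≤ (beta n a b c : ℚ) := by positivity
  linarith

lemma cutCost_ge {n : ℕ} (hn : 1 < n) (a b c : Fin n → ℕ) (S : Finset (V n)) :
    (beta n a b c : ℚ) * (cut n S).card ≤ cutCost n a b c S := by
  unfold cutCost
  calc (beta n a b c : ℚ) * (cut n S).card = ∑ _e ∈ cut n S, (beta n a b c : ℚ) := by
        rw [Finset.sum_const, nsmul_eq_mul]; ring
    _ ≤ _ := Finset.sum_le_sum (fun e _ => beta_le_ecost hn a b c e)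

lemma single_le_cutCost {n : ℕ} (hn : 1 < n) (a b c : Fin n → ℕ) (S : Finset (V n))
    (e : E n) (he : e ∈ cut n S) : ecost n a b c e ≤ cutCost n a b c S :=
  Finset.single_le_sum (fun f _ => ecost_nonneg hn a b c f) he

lemma cutCost_S₀ {n : ℕ} (hn : 1 < n) (a b c : Fin n → ℕ) (hc : ∀ i, 0 < c i) :
    cutCost n a b c (S₀ n) ≤ 3 * (beta n a b c : ℚ) + 3 * (Tsum n a b c : ℚ) - 1 := by
  have h0 : 0 < n := by omega
  unfold cutCost
  rw [cut_S₀ h0 hn]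
  have hne1 : ((0 : Fin 3), some (⟨0, h0⟩ : Fin n)) ∉
      ({((1 : Fin 3), some (⟨0, h0⟩ : Fin n)), ((2 : Fin 3), some (⟨1, hn⟩ : Fin n))} :
        Finset (E n)) := by
    simp [Prod.ext_iff, Fin.ext_iff]
  have hne2 : ((1 : Fin 3), some (⟨0, h0⟩ : Fin n)) ∉
      ({((2 : Fin 3), some (⟨1, hn⟩ : Fin n))} : Finset (E n)) := by
    simp [Prod.ext_iff, Fin.ext_iff]
  rw [Finset.sum_insert hne1, Finset.sum_insert hne2, Finset.sum_singleton]
  have e1 : ecost n a b c ((0 : Fin 3), some (⟨0, h0⟩ : Fin n))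
      = (beta n a b c : ℚ) + (a ⟨0, h0⟩ : ℚ) := by
    simp [ecost]
  have e2 : ecost n a b c ((1 : Fin 3), some (⟨0, h0⟩ : Fin n))
      = (beta n a b c : ℚ) + (b ⟨0, h0⟩ : ℚ) := by
    simp [ecost]
  have e3 : ecost n a b c ((2 : Fin 3), some (⟨1, hn⟩ : Fin n))
      = (beta n a b c : ℚ) + (Tsum n a b c : ℚ) - (c ⟨1, hn⟩ : ℚ) := by
    simp [ecost]
  rw [e1, e2, e3]
  have hA : (a ⟨0, h0⟩ : ℚ) ≤ (Tsum n a b c : ℚ) := by exact_mod_cast le_Tsum_a a b c _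
  have hB : (b ⟨0, h0⟩ : ℚ) ≤ (Tsum n a b c : ℚ) := by exact_mod_cast le_Tsum_b a b c _
  have hC : (1:ℚ) ≤ (c ⟨1, hn⟩ : ℚ) := by exact_mod_cast hc ⟨1, hn⟩
  linarith

/-! ### Every path crosses the cut -/

lemma not_in_cut {n : ℕ} {S : Finset (V n)} {e : E n} (h : e ∉ cut n S) :
    ((ends n e).1 ∈ S ↔ (ends n e).2 ∈ S) := by
  by_contra hc
  exact h (by simp [cut, hc])

lemma pathA_hits {n : ℕ} (hn : 1 < n) (S : Finset (V n)) (hsep : ¬(V.u ∈ S ↔ V.v ∈ S))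
    (hnone : ((0 : Fin 3), (none : Option (Fin n))) ∉ cut n S)
    (hall : ∀ i : Fin n, ((0 : Fin 3), (some i : Option (Fin n))) ∉ cut n S) : False := by
  have h0 : 0 < n := by omega
  have hbase := not_in_cut hnone
  rw [show ends n ((0 : Fin 3), none) = (V.v, firstV V.A V.u) from rfl] at hbase
  rw [show firstV (V.A : Fin n → V n) V.u = V.A ⟨0, h0⟩ by rw [firstV, dif_pos h0]] at hbase
  have key : ∀ k (hk : k < n), (V.A ⟨k, hk⟩ ∈ S ↔ V.v ∈ S) := by
    intro k
    induction k with
    | zero => intro hk; exact hbase.symm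
    | succ m ih =>
      intro hk
      have hm : m < n := by omega
      have hstep := not_in_cut (hall ⟨m, hm⟩)
      rw [show ends n ((0 : Fin 3), some (⟨m, hm⟩ : Fin n))
          = (V.A ⟨m, hm⟩, nextV V.A V.u ⟨m, hm⟩) from rfl] at hstep
      rw [show nextV (V.A : Fin n → V n) V.u ⟨m, hm⟩ = V.A ⟨m + 1, hk⟩ by
        rw [nextV, dif_pos (show (⟨m, hm⟩ : Fin n).val + 1 < n from hk)]] at hstep
      exact hstep.symm.trans (ih hm)
  have hlast := not_in_cut (hall ⟨n - 1, by omega⟩)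
  rw [show ends n ((0 : Fin 3), some (⟨n - 1, by omega⟩ : Fin n))
      = (V.A ⟨n - 1, by omega⟩, nextV V.A V.u ⟨n - 1, by omega⟩) from rfl] at hlast
  rw [show nextV (V.A : Fin n → V n) V.u ⟨n - 1, by omega⟩ = V.u by
    rw [nextV, dif_neg (by simp; omega)]] at hlast
  have hlast' : V.A ⟨n - 1, by omega⟩ ∈ S ↔ V.u ∈ S := hlast
  exact hsep (hlast'.symm.trans (key (n-1) (by omega)))

lemma pathB_hits {n : ℕ} (hn : 1 < n) (S : Finset (V n)) (hsep : ¬(V.u ∈ S ↔ V.v ∈ S))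
    (hnone : ((1 : Fin 3), (none : Option (Fin n))) ∉ cut n S)
    (hall : ∀ i : Fin n, ((1 : Fin 3), (some i : Option (Fin n))) ∉ cut n S) : False := by
  have h0 : 0 < n := by omega
  have hbase := not_in_cut hnone
  rw [show ends n ((1 : Fin 3), none) = (V.v, firstV V.B V.u) from rfl] at hbase
  rw [show firstV (V.B : Fin n → V n) V.u = V.B ⟨0, h0⟩ by rw [firstV, dif_pos h0]] at hbase
  have key : ∀ k (hk : k < n), (V.B ⟨k, hk⟩ ∈ S ↔ V.v ∈ S) := by
    intro k
    induction k with
    | zero => intro hk; exact hbase.symm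
    | succ m ih =>
      intro hk
      have hm : m < n := by omega
      have hstep := not_in_cut (hall ⟨m, hm⟩)
      rw [show ends n ((1 : Fin 3), some (⟨m, hm⟩ : Fin n))
          = (V.B ⟨m, hm⟩, nextV V.B V.u ⟨m, hm⟩) from rfl] at hstep
      rw [show nextV (V.B : Fin n → V n) V.u ⟨m, hm⟩ = V.B ⟨m + 1, hk⟩ by
        rw [nextV, dif_pos (show (⟨m, hm⟩ : Fin n).val + 1 < n from hk)]] at hstep
      exact hstep.symm.trans (ih hm)
  have hlast := not_in_cut (hall ⟨n - 1, by omega⟩)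
  rw [show ends n ((1 : Fin 3), some (⟨n - 1, by omega⟩ : Fin n))
      = (V.B ⟨n - 1, by omega⟩, nextV V.B V.u ⟨n - 1, by omega⟩) from rfl] at hlast
  rw [show nextV (V.B : Fin n → V n) V.u ⟨n - 1, by omega⟩ = V.u by
    rw [nextV, dif_neg (by simp; omega)]] at hlast
  have hlast' : V.B ⟨n - 1, by omega⟩ ∈ S ↔ V.u ∈ S := hlast
  exact hsep (hlast'.symm.trans (key (n-1) (by omega)))

lemma pathC_hits {n : ℕ} (hn : 1 < n) (S : Finset (V n)) (hsep : ¬(V.u ∈ S ↔ V.v ∈ S))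
    (hnone : ((2 : Fin 3), (none : Option (Fin n))) ∉ cut n S)
    (hall : ∀ i : Fin n, ((2 : Fin 3), (some i : Option (Fin n))) ∉ cut n S) : False := by
  have h0 : 0 < n := by omega
  have hbase := not_in_cut hnone
  rw [show ends n ((2 : Fin 3), none) = (V.u, firstV V.C V.v) from rfl] at hbase
  rw [show firstV (V.C : Fin n → V n) V.v = V.C ⟨0, h0⟩ by rw [firstV, dif_pos h0]] at hbase
  have key : ∀ k (hk : k < n), (V.C ⟨k, hk⟩ ∈ S ↔ V.u ∈ S) := by
    intro k
    induction k with
    | zero => intro hk; exact hbase.symm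
    | succ m ih =>
      intro hk
      have hm : m < n := by omega
      have hstep := not_in_cut (hall ⟨m, hm⟩)
      rw [show ends n ((2 : Fin 3), some (⟨m, hm⟩ : Fin n))
          = (V.C ⟨m, hm⟩, nextV V.C V.v ⟨m, hm⟩) from rfl] at hstep
      rw [show nextV (V.C : Fin n → V n) V.v ⟨m, hm⟩ = V.C ⟨m + 1, hk⟩ by
        rw [nextV, dif_pos (show (⟨m, hm⟩ : Fin n).val + 1 < n from hk)]] at hstep
      exact hstep.symm.trans (ih hm)
  have hlast := not_in_cut (hall ⟨n - 1, by omega⟩)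
  rw [show ends n ((2 : Fin 3), some (⟨n - 1, by omega⟩ : Fin n))
      = (V.C ⟨n - 1, by omega⟩, nextV V.C V.v ⟨n - 1, by omega⟩) from rfl] at hlast
  rw [show nextV (V.C : Fin n → V n) V.v ⟨n - 1, by omega⟩ = V.v by
    rw [nextV, dif_neg (by simp; omega)]] at hlast
  exact hsep ((key (n-1) (by omega)).symm.trans hlast)

/-! ### Counting -/

lemma card_split {n : ℕ} (s : Finset (E n)) :
    (s ∩ PA n).card + (s ∩ PB n).card + (s ∩ PC n).card = s.card := by
  have h1 : s ∩ PA n = s.filter (fun e => e.1 = 0) := by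
    ext e; simp [PA, Finset.mem_inter, Finset.mem_filter]
  have h2 : s ∩ PB n = s.filter (fun e => e.1 = 1) := by
    ext e; simp [PB, Finset.mem_inter, Finset.mem_filter]
  have h3 : s ∩ PC n = s.filter (fun e => e.1 = 2) := by
    ext e; simp [PC, Finset.mem_inter, Finset.mem_filter]
  rw [h1, h2, h3, Finset.card_filter, Finset.card_filter, Finset.card_filter,
    ← Finset.sum_add_distrib, ← Finset.sum_add_distrib]
  have key : ∀ e : E n, ((if e.1 = 0 then 1 else 0) + (if e.1 = 1 then 1 else 0))
      + (if e.1 = 2 then 1 else 0) = 1 := by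
    rintro ⟨p, o⟩
    fin_cases p <;> rfl
  rw [Finset.sum_congr rfl (fun e _ => key e), Finset.sum_const, smul_eq_mul, mul_one]

/-- Every minimum-cost bisection cuts exactly one edge of each of `P_A, P_B, P_C` and
none of `e_A, e_B, e_C`. -/
theorem minimum_bisection_structure (n : ℕ) (hn : 1 < n) (a b c : Fin n → ℕ)
    (ha : ∀ i, 0 < a i) (hb : ∀ i, 0 < b i) (hc : ∀ i, 0 < c i)
    (S : Finset (V n)) (hS : IsBisection n S)
    (hmin : ∀ S' : Finset (V n), IsBisection n S' →
      cutCost n a b c S ≤ cutCost n a b c S') :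
    ((cut n S ∩ PA n).card = 1 ∧ (cut n S ∩ PB n).card = 1 ∧ (cut n S ∩ PC n).card = 1)
    ∧ (((0 : Fin 3), (none : Option (Fin n))) ∉ cut n S
        ∧ ((1 : Fin 3), (none : Option (Fin n))) ∉ cut n S
        ∧ ((2 : Fin 3), (none : Option (Fin n))) ∉ cut n S) := by
  have h0 : 0 < n := by omega
  have hB := isBisection_S₀ (n := n) hn
  have hle : cutCost n a b c S
      ≤ 3 * (beta n a b c : ℚ) + 3 * (Tsum n a b c : ℚ) - 1 :=
    (hmin (S₀ n) hB).trans (cutCost_S₀ hn a b c hc)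
  have hT1 : (1:ℚ) ≤ (Tsum n a b c : ℚ) := by exact_mod_cast Tsum_pos hn a b c ha
  have hn2 : (2:ℚ) ≤ (n:ℚ) := by exact_mod_cast hn
  have hbeta : (beta n a b c : ℚ) = 4 * (Tsum n a b c : ℚ) * (n:ℚ)^2 := by
    push_cast [beta]; ring
  have hsq : (4:ℚ) ≤ (n:ℚ)^2 := by nlinarith
  have hbT : 16 * (Tsum n a b c : ℚ) ≤ (beta n a b c : ℚ) := by
    rw [hbeta]; nlinarith
  have hspec : ∀ p : Fin 3, (p, (none : Option (Fin n))) ∉ cut n S := by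
    intro p hmem
    have hsc := single_le_cutCost hn a b c S _ hmem
    have hec : ecost n a b c (p, none)
        = 1210 * (n:ℚ)^2 * (2 * (beta n a b c : ℚ) + (Tsum n a b c : ℚ)) := rfl
    rw [hec] at hsc
    have hprod : 4 * (2 * (beta n a b c : ℚ) + (Tsum n a b c : ℚ))
        ≤ (n:ℚ)^2 * (2 * (beta n a b c : ℚ) + (Tsum n a b c : ℚ)) :=
      mul_le_mul_of_nonneg_right hsq (by linarith)
    linarith
  have hcard : (cut n S).card ≤ 3 := by
    by_contra h4
    have h4' : (4:ℚ) ≤ ((cut n S).card : ℚ) := by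
      have : 4 ≤ (cut n S).card := by omega
      exact_mod_cast this
    have hge := cutCost_ge hn a b c S
    have hbpos : (0:ℚ) ≤ (beta n a b c : ℚ) := by positivity
    nlinarith
  have hsep := bisection_split hn S hS.1 hS.2
  have hA1 : 1 ≤ (cut n S ∩ PA n).card := by
    by_contra h
    have hempty : cut n S ∩ PA n = ∅ := by
      rw [← Finset.card_eq_zero]; omega
    have hnc : ∀ o : Option (Fin n), ((0 : Fin 3), o) ∉ cut n S := by
      intro o hm
      have : ((0 : Fin 3), o) ∈ cut n S ∩ PA n :=
        Finset.mem_inter.mpr ⟨hm, by simp [PA]⟩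
      rw [hempty] at this
      simp at this
    exact pathA_hits hn S hsep (hnc none) (fun i => hnc (some i))
  have hB1 : 1 ≤ (cut n S ∩ PB n).card := by
    by_contra h
    have hempty : cut n S ∩ PB n = ∅ := by
      rw [← Finset.card_eq_zero]; omega
    have hnc : ∀ o : Option (Fin n), ((1 : Fin 3), o) ∉ cut n S := by
      intro o hm
      have : ((1 : Fin 3), o) ∈ cut n S ∩ PB n :=
        Finset.mem_inter.mpr ⟨hm, by simp [PB]⟩
      rw [hempty] at this
      simp at this
    exact pathB_hits hn S hsep (hnc none) (fun i => hnc (some i))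
  have hC1 : 1 ≤ (cut n S ∩ PC n).card := by
    by_contra h
    have hempty : cut n S ∩ PC n = ∅ := by
      rw [← Finset.card_eq_zero]; omega
    have hnc : ∀ o : Option (Fin n), ((2 : Fin 3), o) ∉ cut n S := by
      intro o hm
      have : ((2 : Fin 3), o) ∈ cut n S ∩ PC n :=
        Finset.mem_inter.mpr ⟨hm, by simp [PC]⟩
      rw [hempty] at this
      simp at this
    exact pathC_hits hn S hsep (hnc none) (fun i => hnc (some i))
  have hsum := card_split (cut n S)
  exact ⟨⟨by omega, by omega, by omega⟩, hspec 0, hspec 1, hspec 2⟩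

end SCLB
end

section
/- Let i,j,k∈{1,…,n} and let S⊆V with ∅≠S⊊V be such that the cut of S is exactly the three edges (v_{a_i},v_{a_{i+1}}), (v_{b_j},v_{b_{j+1}}), (v_{c_k},v_{c_{k+1}}). Then, up to replacing S by its complement, S = {v} ∪ {v_{a_1},…,v_{a_i}} ∪ {v_{b_1},…,v_{b_j}} ∪ {v_{c_{k+1}},…,v_{c_n}} and V∖S = {u} ∪ {v_{a_{i+1}},…,v_{a_n}} ∪ {v_{b_{j+1}},…,v_{b_n}} ∪ {v_{c_1},…,v_{c_k}}. -/
open Finset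

namespace SCLB

def inSijk (n : ℕ) (i j k : Fin n) : V n → Bool
  | V.v => true
  | V.u => false
  | V.A t => decide (t.val ≤ i.val)
  | V.B t => decide (t.val ≤ j.val)
  | V.C t => decide (k.val < t.val)

/-- The set `S_{i,j,k} = {v} ∪ {v_{a_1},…,v_{a_i}} ∪ {v_{b_1},…,v_{b_j}} ∪
{v_{c_{k+1}},…,v_{c_n}}` (here `i, j, k : Fin n` are the 0-indexed versions of the paper's
1-indexed `i, j, k`). -/
def Sijk (n : ℕ) (i j k : Fin n) : Finset (V n) :=
  Finset.univ.filter fun x => inSijk n i j k x = true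
/-- Auxiliary: propagation along a path. -/
lemma path_prop {n : ℕ} (hn0 : 0 < n) (S : Finset (V n)) (start : V n) (f : Fin n → V n)
    (idx : Fin n)
    (h0 : (f ⟨0, hn0⟩ ∈ S ↔ start ∈ S))
    (hstep : ∀ m (hm : m < n) (h1 : m + 1 < n),
      (¬(f ⟨m, hm⟩ ∈ S ↔ f ⟨m + 1, h1⟩ ∈ S)) ↔ m = idx.val) :
    ∀ m (hm : m < n), ((f ⟨m, hm⟩ ∈ S ↔ start ∈ S) ↔ m ≤ idx.val) := by
  intro m
  induction m with
  | zero => intro hm; simpa using h0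
  | succ m ih =>
    intro hm
    have hm' : m < n := by omega
    have hstep' := hstep m hm' hm
    have ih' := ih hm'
    by_cases hcase : m = idx.val
    · have h1 : m ≤ idx.val := by omega
      have h2 : ¬(m + 1 ≤ idx.val) := by omega
      tauto
    · have h1 : (m + 1 ≤ idx.val) ↔ (m ≤ idx.val) := by omega
      tauto

/-- Auxiliary: the endpoint of a path lies on the opposite side of the start. -/
lemma path_end {n : ℕ} (hn0 : 0 < n) (S : Finset (V n)) (start top : V n) (f : Fin n → V n)
    (idx : Fin n)
    (hA : ∀ m (hm : m < n), ((f ⟨m, hm⟩ ∈ S ↔ start ∈ S) ↔ m ≤ idx.val))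
    (hlast : (¬(f ⟨n - 1, by omega⟩ ∈ S ↔ top ∈ S)) ↔ n - 1 = idx.val) :
    ¬(top ∈ S ↔ start ∈ S) := by
  have h1 := hA (n - 1) (by omega)
  have hle : idx.val ≤ n - 1 := by have := idx.isLt; omega
  by_cases hcase : n - 1 = idx.val
  · have h2 : n - 1 ≤ idx.val := by omega
    tauto
  · have h2 : ¬(n - 1 ≤ idx.val) := by omega
    tauto

/-- If the cut of `S` is exactly the three edges `(v_{a_i},v_{a_{i+1}})`,
`(v_{b_j},v_{b_{j+1}})`, `(v_{c_k},v_{c_{k+1}})`, then `S` is `S_{i,j,k}` or its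
complement. -/
theorem cut_three_edges_determines_set (n : ℕ) (hn : 1 < n) (a b c : Fin n → ℕ)
    (ha : ∀ i, 0 < a i) (hb : ∀ i, 0 < b i) (hc : ∀ i, 0 < c i)
    (i j k : Fin n) (S : Finset (V n)) (hne : S.Nonempty) (hproper : S ≠ Finset.univ)
    (hcut : cut n S =
      {((0 : Fin 3), some i), ((1 : Fin 3), some j), ((2 : Fin 3), some k)}) :
    S = Sijk n i j k ∨ S = (Sijk n i j k)ᶜ := by
  have hn0 : 0 < n := by omega
  have key : ∀ e : E n, (¬(((ends n e).1 ∈ S) ↔ ((ends n e).2 ∈ S))) ↔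
      (e = ((0 : Fin 3), some i) ∨ e = ((1 : Fin 3), some j) ∨ e = ((2 : Fin 3), some k)) := by
    intro e
    have h1 : e ∈ cut n S ↔
        e ∈ ({((0 : Fin 3), some i), ((1 : Fin 3), some j), ((2 : Fin 3), some k)} :
          Finset (E n)) := by rw [hcut]
    simpa [cut] using h1
  -- base edges
  have hA0 : ((V.A ⟨0, hn0⟩ : V n) ∈ S ↔ V.v ∈ S) := by
    have h := key ((0 : Fin 3), none)
    simp [ends, firstV, hn0, Prod.ext_iff] at h
    tauto
  have hB0 : ((V.B ⟨0, hn0⟩ : V n) ∈ S ↔ V.v ∈ S) := by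
    have h := key ((1 : Fin 3), none)
    simp [ends, firstV, hn0, Prod.ext_iff] at h
    tauto
  have hC0 : ((V.C ⟨0, hn0⟩ : V n) ∈ S ↔ V.u ∈ S) := by
    have h := key ((2 : Fin 3), none)
    simp [ends, firstV, hn0, Prod.ext_iff] at h
    tauto
  -- step edges
  have hAstep : ∀ m (hm : m < n) (h1 : m + 1 < n),
      (¬((V.A ⟨m, hm⟩ : V n) ∈ S ↔ V.A ⟨m + 1, h1⟩ ∈ S)) ↔ m = i.val := by
    intro m hm h1
    have h := key ((0 : Fin 3), some ⟨m, hm⟩)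
    simpa [ends, nextV, h1, Prod.ext_iff, Fin.ext_iff] using h
  have hBstep : ∀ m (hm : m < n) (h1 : m + 1 < n),
      (¬((V.B ⟨m, hm⟩ : V n) ∈ S ↔ V.B ⟨m + 1, h1⟩ ∈ S)) ↔ m = j.val := by
    intro m hm h1
    have h := key ((1 : Fin 3), some ⟨m, hm⟩)
    simpa [ends, nextV, h1, Prod.ext_iff, Fin.ext_iff] using h
  have hCstep : ∀ m (hm : m < n) (h1 : m + 1 < n),
      (¬((V.C ⟨m, hm⟩ : V n) ∈ S ↔ V.C ⟨m + 1, h1⟩ ∈ S)) ↔ m = k.val := by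
    intro m hm h1
    have h := key ((2 : Fin 3), some ⟨m, hm⟩)
    simpa [ends, nextV, h1, Prod.ext_iff, Fin.ext_iff] using h
  -- last edges
  have hnlt : ¬(n - 1 + 1 < n) := by omega
  have hAlast : (¬((V.A ⟨n - 1, by omega⟩ : V n) ∈ S ↔ V.u ∈ S)) ↔ n - 1 = i.val := by
    have h := key ((0 : Fin 3), some ⟨n - 1, by omega⟩)
    simpa [ends, nextV, hnlt, Prod.ext_iff, Fin.ext_iff] using h
  have hClast : (¬((V.C ⟨n - 1, by omega⟩ : V n) ∈ S ↔ V.v ∈ S)) ↔ n - 1 = k.val := by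
    have h := key ((2 : Fin 3), some ⟨n - 1, by omega⟩)
    simpa [ends, nextV, hnlt, Prod.ext_iff, Fin.ext_iff] using h
  -- path propagation
  have hA := path_prop hn0 S V.v V.A i hA0 hAstep
  have hB := path_prop hn0 S V.v V.B j hB0 hBstep
  have hC := path_prop hn0 S V.u V.C k hC0 hCstep
  have hu : ¬(V.u ∈ S ↔ V.v ∈ S) := path_end hn0 S V.v V.u V.A i hA hAlast
  by_cases hv : V.v ∈ S
  · left
    have husim : V.u ∉ S := fun h => hu (iff_of_true h hv)
    ext x
    cases x with
    | u => simp [Sijk, inSijk, husim]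
    | v => simp [Sijk, inSijk, hv]
    | A t =>
      have h1 : V.A t ∈ S ↔ t.val ≤ i.val := by simpa [hv] using hA t.val t.isLt
      simp [Sijk, inSijk, h1]
    | B t =>
      have h1 : V.B t ∈ S ↔ t.val ≤ j.val := by simpa [hv] using hB t.val t.isLt
      simp [Sijk, inSijk, h1]
    | C t =>
      have h3 := hC t.val t.isLt
      have h1 : V.C t ∈ S ↔ k.val < t.val := by
        constructor
        · intro hm
          by_contra hle
          exact husim ((h3.mpr (by omega)).mp hm)
        · intro hlt
          by_contra hm
          have := h3.mp (iff_of_false hm husim)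
          omega
      simp [Sijk, inSijk, h1]
  · right
    have husim : V.u ∈ S := by
      by_contra h; exact hu (iff_of_false h hv)
    ext x
    cases x with
    | u => simp [Sijk, inSijk, husim]
    | v => simp [Sijk, inSijk, hv]
    | A t =>
      have h3 := hA t.val t.isLt
      have h1 : V.A t ∈ S ↔ ¬(t.val ≤ i.val) := by
        constructor
        · intro hm hle
          exact hv ((h3.mpr hle).mp hm)
        · intro hnle
          by_contra hm
          exact hnle (h3.mp (iff_of_false hm hv))
      simp [Sijk, inSijk, h1]
    | B t =>
      have h3 := hB t.val t.isLt
      have h1 : V.B t ∈ S ↔ ¬(t.val ≤ j.val) := by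
        constructor
        · intro hm hle
          exact hv ((h3.mpr hle).mp hm)
        · intro hnle
          by_contra hm
          exact hnle (h3.mp (iff_of_false hm hv))
      simp [Sijk, inSijk, h1]
    | C t =>
      have h3 := hC t.val t.isLt
      have h1 : V.C t ∈ S ↔ t.val ≤ k.val := by
        constructor
        · intro hm
          exact h3.mp (iff_of_true hm husim)
        · intro hle
          exact (h3.mpr hle).mpr husim
      simp [Sijk, inSijk, h1]

end SCLB
end

section
/- In the graph G, for every i∈{1,…,n} the weighted shortest-path distance between a_i and b_i equals (n+2)·M + A[i] + B[i]. -/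
open Finset

namespace DiamGadget

inductive V (n : ℕ) : Type
  | a : Fin n → V n
  | b : Fin n → V n
  | l : V n
  | r : V n
  | l' : V n
  | r' : V n
  deriving DecidableEq, Fintype

def M : ℕ := 4

/-- One-directional edge-weight table encoding the instance `(A, B)`; a value `0` means
"no edge in this direction".  Here `i : Fin n` is 0-indexed, so `a i` is the paper's
`a_{i+1}`, whence the weights `(i+1)·M + A[i]` and `(n−i)·M + A[i]`. -/
def wt0 (n : ℕ) (A B : Fin n → Fin 2) : V n → V n → ℕ
  | V.l, V.l' => M
  | V.r, V.r' => M
  | V.a i, V.l => (i.val + 1) * M + (A i).val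
  | V.a i, V.r => (n - i.val) * M + (A i).val
  | V.b i, V.l' => (n - i.val) * M + (B i).val
  | V.b i, V.r' => (i.val + 1) * M + (B i).val
  | _, _ => 0

/-- The symmetrized edge weight. -/
def wtE (n : ℕ) (A B : Fin n → Fin 2) (x y : V n) : ℕ :=
  wt0 n A B x y + wt0 n A B y x

/-- The graph `G`: `x` and `y` are adjacent iff the weight table records an edge. -/
def G (n : ℕ) (A B : Fin n → Fin 2) : SimpleGraph (V n) :=
  SimpleGraph.fromRel fun x y => wt0 n A B x y ≠ 0

/-- The total weight of a walk. -/
def wWeight {n : ℕ} {A B : Fin n → Fin 2} {x y : V n} (p : (G n A B).Walk x y) : ℕ :=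
  (p.darts.map fun d => wtE n A B d.toProd.1 d.toProd.2).sum

/-- The weighted shortest-path distance: the minimum over paths from `x` to `y` of the sum
of the edge weights along the path. -/
noncomputable def dist (n : ℕ) (A B : Fin n → Fin 2) (x y : V n) : ℕ :=
  sInf {m | ∃ p : (G n A B).Walk x y, p.IsPath ∧ wWeight p = m}

/-- The weighted diameter: the maximum of `dist x y` over all pairs of vertices. -/
noncomputable def diam (n : ℕ) (A B : Fin n → Fin 2) : ℕ :=
  Finset.univ.sup fun p : V n × V n => dist n A B p.1 p.2
/-- A potential function: (conjecturally) the distance from `a_i`, used only as a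
Lipschitz lower-bound certificate. -/
def pot (n : ℕ) (A B : Fin n → Fin 2) (i : Fin n) : V n → ℤ
  | V.a j => if j = i then 0 else
      (min ((i.val : ℤ) + j.val + 2) (2 * n - i.val - j.val)) * M + (A i).val + (A j).val
  | V.l => ((i.val : ℤ) + 1) * M + (A i).val
  | V.r => ((n : ℤ) - i.val) * M + (A i).val
  | V.l' => ((i.val : ℤ) + 2) * M + (A i).val
  | V.r' => ((n : ℤ) - i.val + 1) * M + (A i).val
  | V.b j => (min ((i.val : ℤ) + 2 + n - j.val) ((n : ℤ) - i.val + 2 + j.val)) * M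
      + (A i).val + (B j).val

lemma pot_lip (n : ℕ) (A B : Fin n → Fin 2) (i : Fin n) {x y : V n}
    (h : (G n A B).Adj x y) :
    pot n A B i y ≤ pot n A B i x + wtE n A B x y := by
  rw [G, SimpleGraph.fromRel_adj] at h
  obtain ⟨hne, hor⟩ := h
  have hi := i.isLt
  cases x <;> cases y <;>
    simp only [wt0, wtE, pot, M] at hor ⊢ <;>
    first
      | omega
      | (simp only [min_def]; split_ifs with hji <;> (try subst hji) <;> omega)
      | simp at hor

lemma walk_lb (n : ℕ) (A B : Fin n → Fin 2) (i : Fin n) {x y : V n}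
    (p : (G n A B).Walk x y) :
    pot n A B i y ≤ pot n A B i x + wWeight p := by
  induction p with
  | nil => simp [wWeight]
  | @cons u v w h q ih =>
      have h1 := pot_lip n A B i h
      have h2 : wWeight (SimpleGraph.Walk.cons h q)
          = wtE n A B u v + wWeight q := by
        simp [wWeight]
      push_cast [h2]
      push_cast at ih h1
      linarith

/-- For every coordinate `i`, the weighted distance between `a_i` and `b_i` is exactly
`(n+2)·M + A[i] + B[i]`. -/
theorem dist_ai_bi (n : ℕ) (hn : 1 ≤ n) (A B : Fin n → Fin 2) (i : Fin n) :
    dist n A B (V.a i) (V.b i) = (n + 2) * M + (A i).val + (B i).val := by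
  have hi := i.isLt
  have h1 : (G n A B).Adj (V.a i) V.l := by
    rw [G, SimpleGraph.fromRel_adj]
    exact ⟨by simp, Or.inl (by simp [wt0, M])⟩
  have h2 : (G n A B).Adj V.l V.l' := by
    rw [G, SimpleGraph.fromRel_adj]
    exact ⟨by simp, Or.inl (by simp [wt0, M])⟩
  have h3 : (G n A B).Adj V.l' (V.b i) := by
    rw [G, SimpleGraph.fromRel_adj]
    exact ⟨by simp, Or.inr (by simp [wt0, M]; omega)⟩
  let p : (G n A B).Walk (V.a i) (V.b i) :=
    SimpleGraph.Walk.cons h1 (SimpleGraph.Walk.cons h2 (SimpleGraph.Walk.cons h3 .nil))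
  have hpath : p.IsPath := by
    simp [p, SimpleGraph.Walk.isPath_def]
  have hw : wWeight p = (n + 2) * M + (A i).val + (B i).val := by
    simp [p, wWeight, wtE, wt0, M]
    omega
  apply le_antisymm
  · exact Nat.sInf_le ⟨p, hpath, hw⟩
  · refine le_csInf ⟨_, p, hpath, hw⟩ ?_
    rintro m ⟨q, -, rfl⟩
    have hlb := walk_lb n A B i q
    simp only [pot, if_pos rfl, M, min_def] at hlb ⊢
    split_ifs at hlb <;> omega

end DiamGadget
end

section
/- In the graph G, for all i,j∈{1,…,n} with i≠j, each of the weighted shortest-path distances d(a_i,b_j), d(a_i,a_j), and d(b_i,b_j) is at most (n+1)·M + 2. -/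
open Finset

namespace DiamGadget

section Aux

variable {n : ℕ} {A B : Fin n → Fin 2}

lemma dist_le_of_path {x y : V n} (p : (G n A B).Walk x y) (hp : p.IsPath) :
    dist n A B x y ≤ wWeight p :=
  Nat.sInf_le ⟨p, hp, rfl⟩

lemma adj_al (i : Fin n) : (G n A B).Adj (V.a i) V.l := by
  rw [G, SimpleGraph.fromRel_adj]
  exact ⟨by simp, Or.inl (by simp [wt0, M])⟩

lemma adj_ar (i : Fin n) (hi : i.val < n) : (G n A B).Adj (V.a i) V.r := by
  rw [G, SimpleGraph.fromRel_adj]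
  refine ⟨by simp, Or.inl ?_⟩
  simp only [wt0, M]
  omega

lemma adj_bl' (i : Fin n) (hi : i.val < n) : (G n A B).Adj (V.b i) V.l' := by
  rw [G, SimpleGraph.fromRel_adj]
  refine ⟨by simp, Or.inl ?_⟩
  simp only [wt0, M]
  omega

lemma adj_br' (i : Fin n) : (G n A B).Adj (V.b i) V.r' := by
  rw [G, SimpleGraph.fromRel_adj]
  exact ⟨by simp, Or.inl (by simp [wt0, M])⟩

lemma adj_ll' : (G n A B).Adj (V.l : V n) V.l' := by
  rw [G, SimpleGraph.fromRel_adj]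
  exact ⟨by simp, Or.inl (by simp [wt0, M])⟩

lemma adj_rr' : (G n A B).Adj (V.r : V n) V.r' := by
  rw [G, SimpleGraph.fromRel_adj]
  exact ⟨by simp, Or.inl (by simp [wt0, M])⟩

end Aux

/-- For `i ≠ j`, each of `d(a_i, b_j)`, `d(a_i, a_j)`, `d(b_i, b_j)` is at most
`(n+1)·M + 2`. -/
theorem dist_offdiag_le (n : ℕ) (hn : 1 ≤ n) (A B : Fin n → Fin 2) (i j : Fin n)
    (hij : i ≠ j) :
    dist n A B (V.a i) (V.b j) ≤ (n + 1) * M + 2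
    ∧ dist n A B (V.a i) (V.a j) ≤ (n + 1) * M + 2
    ∧ dist n A B (V.b i) (V.b j) ≤ (n + 1) * M + 2 := by
  have hA : ∀ k : Fin n, (A k).val ≤ 1 := fun k => Nat.lt_succ_iff.mp (A k).isLt
  have hB : ∀ k : Fin n, (B k).val ≤ 1 := fun k => Nat.lt_succ_iff.mp (B k).isLt
  have hi : i.val < n := i.isLt
  have hj : j.val < n := j.isLt
  have hne : i.val ≠ j.val := fun h => hij (Fin.ext h)
  refine ⟨?_, ?_, ?_⟩
  · rcases lt_or_gt_of_ne hne with h | h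
    · refine le_trans (dist_le_of_path
        (.cons (adj_al i) (.cons adj_ll' (.cons (adj_bl' j hj).symm .nil))) ?_) ?_
      · simp [SimpleGraph.Walk.isPath_def]
      · simp only [wWeight, SimpleGraph.Walk.darts_cons, SimpleGraph.Walk.darts_nil,
          List.map_cons, List.map_nil, List.sum_cons, List.sum_nil, wtE, wt0, M]
        omega
    · refine le_trans (dist_le_of_path
        (.cons (adj_ar i hi) (.cons adj_rr' (.cons (adj_br' j).symm .nil))) ?_) ?_
      · simp [SimpleGraph.Walk.isPath_def]
      · simp only [wWeight, SimpleGraph.Walk.darts_cons, SimpleGraph.Walk.darts_nil,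
          List.map_cons, List.map_nil, List.sum_cons, List.sum_nil, wtE, wt0, M]
        omega
  · by_cases h : i.val + j.val + 1 ≤ n
    · refine le_trans (dist_le_of_path
        (.cons (adj_al i) (.cons (adj_al j).symm .nil)) ?_) ?_
      · simp [SimpleGraph.Walk.isPath_def, hij]
      · simp only [wWeight, SimpleGraph.Walk.darts_cons, SimpleGraph.Walk.darts_nil,
          List.map_cons, List.map_nil, List.sum_cons, List.sum_nil, wtE, wt0, M]
        omega
    · refine le_trans (dist_le_of_path
        (.cons (adj_ar i hi) (.cons (adj_ar j hj).symm .nil)) ?_) ?_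
      · simp [SimpleGraph.Walk.isPath_def, hij]
      · simp only [wWeight, SimpleGraph.Walk.darts_cons, SimpleGraph.Walk.darts_nil,
          List.map_cons, List.map_nil, List.sum_cons, List.sum_nil, wtE, wt0, M]
        omega
  · by_cases h : i.val + j.val + 1 ≤ n
    · refine le_trans (dist_le_of_path
        (.cons (adj_br' i) (.cons (adj_br' j).symm .nil)) ?_) ?_
      · simp [SimpleGraph.Walk.isPath_def, hij]
      · simp only [wWeight, SimpleGraph.Walk.darts_cons, SimpleGraph.Walk.darts_nil,
          List.map_cons, List.map_nil, List.sum_cons, List.sum_nil, wtE, wt0, M]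
        omega
    · refine le_trans (dist_le_of_path
        (.cons (adj_bl' i hi) (.cons (adj_bl' j hj).symm .nil)) ?_) ?_
      · simp [SimpleGraph.Walk.isPath_def, hij]
      · simp only [wWeight, SimpleGraph.Walk.darts_cons, SimpleGraph.Walk.darts_nil,
          List.map_cons, List.map_nil, List.sum_cons, List.sum_nil, wtE, wt0, M]
        omega

end DiamGadget
end
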